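/- Let U(s,t) := (1/t)∫_{[t,2t]} K(s,r) dr with K(s,r) := (1/√π)(χ_{s>r}(s-r)^{-1/2} − χ_{s>0} s^{-1/2}), and Q(s,t) := s ∂U/∂s(s,t). There exists a universal constant C > 0 such that for all t > 0, ∫_{(0,∞)} |Q(s,t)| ds ≤ C√t. -/

import Mathlib

set_option maxHeartbeats 1000000

open MeasureTheory Real

noncomputable def K (s r : ℝ) : ℝ :=
  (1 / Real.sqrt π) *
    ((if r < s then (s - r) ^ (-(1:ℝ)/2) else 0) - (if 0 < s then s ^ (-(1:ℝ)/2) else 0))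

noncomputable def U (s t : ℝ) : ℝ :=
  (1 / t) * ∫ r in Set.Icc t (2 * t), K s r

noncomputable def Q (s t : ℝ) : ℝ := s * deriv (fun s' => U s' t) s

lemma rpow_nhalf_nonpos {x : ℝ} (hx : x ≤ 0) : x ^ (-(1:ℝ)/2) = 0 := by
  rcases lt_or_eq_of_le hx with h | h
  · rw [Real.rpow_def_of_neg h, show (-(1:ℝ)/2 * π) = -(π/2) by ring, Real.cos_neg,
      Real.cos_pi_div_two, mul_zero]
  · rw [h, Real.zero_rpow (by norm_num)]

lemma rpow_half_nonpos {x : ℝ} (hx : x ≤ 0) : x ^ ((1:ℝ)/2) = 0 := by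
  rcases lt_or_eq_of_le hx with h | h
  · rw [Real.rpow_def_of_neg h, show ((1:ℝ)/2 * π) = π/2 by ring, Real.cos_pi_div_two, mul_zero]
  · rw [h, Real.zero_rpow (by norm_num)]

lemma K_eq (s r : ℝ) : K s r = (1 / Real.sqrt π) * ((s - r) ^ (-(1:ℝ)/2) - s ^ (-(1:ℝ)/2)) := by
  unfold K
  congr 2
  · split_ifs with h
    · rfl
    · exact (rpow_nhalf_nonpos (by linarith [not_lt.mp h])).symm
  · split_ifs with h
    · rfl
    · exact (rpow_nhalf_nonpos (not_lt.mp h)).symm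

lemma U_eq {t : ℝ} (ht : 0 < t) (s : ℝ) :
    U s t = (1 / Real.sqrt π) * (1 / t) *
      (2 * (s - t) ^ ((1:ℝ)/2) - 2 * (s - 2*t) ^ ((1:ℝ)/2) - t * s ^ (-(1:ℝ)/2)) := by
  have h12 : t ≤ 2 * t := by linarith
  have hint : IntervalIntegrable (fun r => (s - r) ^ (-(1:ℝ)/2)) volume t (2*t) := by
    have := (intervalIntegral.intervalIntegrable_rpow' (a := s - t) (b := s - 2*t)
      (r := -(1:ℝ)/2) (by norm_num)).comp_sub_left s
    simpa using this
  have hval : (∫ r in t..(2*t), (s - r) ^ (-(1:ℝ)/2)) =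
      2 * (s - t) ^ ((1:ℝ)/2) - 2 * (s - 2*t) ^ ((1:ℝ)/2) := by
    rw [intervalIntegral.integral_comp_sub_left (fun u => u ^ (-(1:ℝ)/2)) s]
    rw [integral_rpow (Or.inl (by norm_num))]
    norm_num
    ring
  unfold U
  simp only [K_eq]
  rw [MeasureTheory.integral_Icc_eq_integral_Ioc,
    ← intervalIntegral.integral_of_le h12, intervalIntegral.integral_const_mul,
    intervalIntegral.integral_sub hint (intervalIntegrable_const),
    hval, intervalIntegral.integral_const]
  have : (2*t - t) • (s ^ (-(1:ℝ)/2)) = t * s ^ (-(1:ℝ)/2) := by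
    rw [smul_eq_mul]; ring_nf
  rw [this]
  ring

lemma Q_eq {t : ℝ} (ht : 0 < t) {s : ℝ} (hs : 0 < s) (h1 : s ≠ t) (h2 : s ≠ 2*t) :
    Q s t = (1 / Real.sqrt π) *
      ((s/t) * ((s - t) ^ (-(1:ℝ)/2) - (s - 2*t) ^ (-(1:ℝ)/2)) + (1/2) * s ^ (-(1:ℝ)/2)) := by
  have hfun : (fun s' => U s' t) = fun s' => (1 / Real.sqrt π) * (1 / t) *
      (2 * (s' - t) ^ ((1:ℝ)/2) - 2 * (s' - 2*t) ^ ((1:ℝ)/2) - t * s' ^ (-(1:ℝ)/2)) := by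
    funext s'; exact U_eq ht s'
  have hd1 : HasDerivAt (fun x : ℝ => (x - t) ^ ((1:ℝ)/2)) ((1/2) * (s - t) ^ (-(1:ℝ)/2)) s := by
    have h := Real.hasDerivAt_rpow_const (x := s - t) (p := (1:ℝ)/2) (Or.inl (sub_ne_zero.mpr h1))
    have h' := h.comp s ((hasDerivAt_id s).sub_const t)
    simp only [Function.comp_def] at h'
    refine HasDerivAt.congr_deriv h' ?_
    norm_num
  have hd2 : HasDerivAt (fun x : ℝ => (x - 2*t) ^ ((1:ℝ)/2)) ((1/2) * (s - 2*t) ^ (-(1:ℝ)/2)) s := by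
    have h := Real.hasDerivAt_rpow_const (x := s - 2*t) (p := (1:ℝ)/2) (Or.inl (sub_ne_zero.mpr h2))
    have h' := h.comp s ((hasDerivAt_id s).sub_const (2*t))
    simp only [Function.comp_def] at h'
    refine HasDerivAt.congr_deriv h' ?_
    norm_num
  have hd3 : HasDerivAt (fun x : ℝ => x ^ (-(1:ℝ)/2)) ((-(1:ℝ)/2) * s ^ (-(3:ℝ)/2)) s := by
    have h := Real.hasDerivAt_rpow_const (x := s) (p := -(1:ℝ)/2) (Or.inl hs.ne')
    convert h using 1
    norm_num
  have hD : HasDerivAt (fun s' => U s' t) ((1 / Real.sqrt π) * (1 / t) *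
      (2 * ((1/2) * (s - t) ^ (-(1:ℝ)/2)) - 2 * ((1/2) * (s - 2*t) ^ (-(1:ℝ)/2))
        - t * ((-(1:ℝ)/2) * s ^ (-(3:ℝ)/2)))) s := by
    rw [hfun]
    exact (((hd1.const_mul 2).sub (hd2.const_mul 2)).sub (hd3.const_mul t)).const_mul _
  have hss : s ^ (-(1:ℝ)/2) = s * s ^ (-(3:ℝ)/2) := by
    rw [show s * s ^ (-(3:ℝ)/2) = s ^ (1:ℝ) * s ^ (-(3:ℝ)/2) by rw [Real.rpow_one],
      ← Real.rpow_add hs]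
    norm_num
  unfold Q
  rw [hD.deriv, hss]
  field_simp
  ring

lemma c_pos : 0 < 1 / Real.sqrt π := by positivity
lemma c_le_one : 1 / Real.sqrt π ≤ 1 := by
  rw [div_le_one (by positivity)]
  nlinarith [Real.sq_sqrt Real.pi_pos.le, Real.sqrt_nonneg π, Real.pi_gt_three,
    Real.sqrt_pos.mpr Real.pi_pos]

lemma nhalf_nonneg (x : ℝ) : 0 ≤ x ^ (-(1:ℝ)/2) := by
  rcases le_or_gt x 0 with h | h
  · rw [rpow_nhalf_nonpos h]
  · positivity

lemma nhalf_mono {x y : ℝ} (hy : 0 < y) (hyx : y ≤ x) : x ^ (-(1:ℝ)/2) ≤ y ^ (-(1:ℝ)/2) :=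
  Real.rpow_le_rpow_of_nonpos hy hyx (by norm_num)

-- region (0,t)
lemma B1 {t s : ℝ} (ht : 0 < t) (hs : 0 < s) (hst : s < t) : |Q s t| ≤ s ^ (-(1:ℝ)/2) := by
  rw [Q_eq ht hs (ne_of_lt hst) (by nlinarith)]
  rw [rpow_nhalf_nonpos (by linarith : s - t ≤ 0), rpow_nhalf_nonpos (by nlinarith : s - 2*t ≤ 0)]
  have he : (1/Real.sqrt π) * ((s/t)*((0:ℝ) - 0) + (1/2)*s ^ (-(1:ℝ)/2))
      = (1/Real.sqrt π)*(1/2)* s ^ (-(1:ℝ)/2) := by ring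
  rw [he, abs_of_nonneg (by positivity)]
  nlinarith [mul_le_mul_of_nonneg_right c_le_one (nhalf_nonneg s), nhalf_nonneg s]

-- region (t,2t)
lemma B2 {t s : ℝ} (ht : 0 < t) (hst : t < s) (hs2 : s < 2*t) :
    |Q s t| ≤ 2 * (s - t) ^ (-(1:ℝ)/2) + t ^ (-(1:ℝ)/2) := by
  have hs : 0 < s := lt_trans ht hst
  rw [Q_eq ht hs (ne_of_gt hst) (ne_of_lt hs2)]
  rw [rpow_nhalf_nonpos (by linarith : s - 2*t ≤ 0), sub_zero]
  have h1 : 0 ≤ (s - t) ^ (-(1:ℝ)/2) := nhalf_nonneg _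
  have h2 : 0 ≤ s ^ (-(1:ℝ)/2) := nhalf_nonneg _
  rw [abs_of_nonneg (by positivity)]
  have hd : s / t ≤ 2 := by rw [div_le_iff₀ ht]; linarith
  have hd0 : 0 ≤ s / t := by positivity
  have hmon : s ^ (-(1:ℝ)/2) ≤ t ^ (-(1:ℝ)/2) := nhalf_mono ht hst.le
  have hc := c_le_one; have hc0 := c_pos
  have key : (s/t) * (s - t) ^ (-(1:ℝ)/2) + (1/2) * s ^ (-(1:ℝ)/2)
      ≤ 2 * (s - t) ^ (-(1:ℝ)/2) + t ^ (-(1:ℝ)/2) := by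
    have := mul_le_mul_of_nonneg_right hd h1
    nlinarith
  calc (1 / Real.sqrt π) * ((s/t) * (s - t) ^ (-(1:ℝ)/2) + (1/2) * s ^ (-(1:ℝ)/2))
      ≤ 1 * ((s/t) * (s - t) ^ (-(1:ℝ)/2) + (1/2) * s ^ (-(1:ℝ)/2)) := by
        apply mul_le_mul_of_nonneg_right c_le_one; positivity
    _ = (s/t) * (s - t) ^ (-(1:ℝ)/2) + (1/2) * s ^ (-(1:ℝ)/2) := by ring
    _ ≤ _ := key

-- region (2t,3t]
lemma B3 {t s : ℝ} (ht : 0 < t) (hst : 2*t < s) (hs3 : s ≤ 3*t) :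
    |Q s t| ≤ 3 * (s - 2*t) ^ (-(1:ℝ)/2) + 4 * t ^ (-(1:ℝ)/2) := by
  have hs : 0 < s := by linarith
  have h1 : 0 ≤ (s - t) ^ (-(1:ℝ)/2) := nhalf_nonneg _
  have h2 : 0 ≤ (s - 2*t) ^ (-(1:ℝ)/2) := nhalf_nonneg _
  have h3 : 0 ≤ s ^ (-(1:ℝ)/2) := nhalf_nonneg _
  have hd : s / t ≤ 3 := by rw [div_le_iff₀ ht]; linarith
  have hd0 : 0 ≤ s / t := by positivity
  have hm1 : (s - t) ^ (-(1:ℝ)/2) ≤ t ^ (-(1:ℝ)/2) := nhalf_mono ht (by linarith)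
  have hm2 : s ^ (-(1:ℝ)/2) ≤ t ^ (-(1:ℝ)/2) := nhalf_mono ht (by linarith)
  have habs : |Q s t| ≤ (s/t) * ((s - t) ^ (-(1:ℝ)/2) + (s - 2*t) ^ (-(1:ℝ)/2))
      + (1/2) * s ^ (-(1:ℝ)/2) := by
    rw [Q_eq ht hs (by nlinarith) (ne_of_gt hst), abs_mul]
    have : |(1 : ℝ) / Real.sqrt π| = 1 / Real.sqrt π := abs_of_nonneg c_pos.le
    rw [this]
    calc (1 / Real.sqrt π) * |(s/t) * ((s - t) ^ (-(1:ℝ)/2) - (s - 2*t) ^ (-(1:ℝ)/2))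
          + (1/2) * s ^ (-(1:ℝ)/2)|
        ≤ 1 * |(s/t) * ((s - t) ^ (-(1:ℝ)/2) - (s - 2*t) ^ (-(1:ℝ)/2))
          + (1/2) * s ^ (-(1:ℝ)/2)| := mul_le_mul_of_nonneg_right c_le_one (abs_nonneg _)
      _ = |(s/t) * ((s - t) ^ (-(1:ℝ)/2) - (s - 2*t) ^ (-(1:ℝ)/2)) + (1/2) * s ^ (-(1:ℝ)/2)| :=
          one_mul _
      _ ≤ (s/t) * |(s - t) ^ (-(1:ℝ)/2) - (s - 2*t) ^ (-(1:ℝ)/2)| + (1/2) * s ^ (-(1:ℝ)/2) := by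
          refine le_trans (abs_add_le _ _) ?_
          rw [abs_mul, abs_of_nonneg hd0, abs_of_nonneg (by positivity : (0:ℝ) ≤ (1/2) * s ^ (-(1:ℝ)/2))]
      _ ≤ (s/t) * ((s - t) ^ (-(1:ℝ)/2) + (s - 2*t) ^ (-(1:ℝ)/2)) + (1/2) * s ^ (-(1:ℝ)/2) := by
          gcongr
          exact le_trans (abs_sub _ _) (by rw [abs_of_nonneg h1, abs_of_nonneg h2])
  refine le_trans habs ?_
  have := mul_le_mul_of_nonneg_right hd (by positivity : 0 ≤ (s - t) ^ (-(1:ℝ)/2) + (s - 2*t) ^ (-(1:ℝ)/2))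
  nlinarith

lemma rpow_nhalf_pos {x : ℝ} (hx : 0 < x) : x ^ (-(1:ℝ)/2) = (Real.sqrt x)⁻¹ := by
  rw [show -(1:ℝ)/2 = -(1/2) by norm_num, Real.rpow_neg hx.le, Real.sqrt_eq_rpow]

lemma B4 {t s : ℝ} (ht : 0 < t) (hs3 : 3*t ≤ s) : |Q s t| ≤ 9 * t * s ^ (-(3:ℝ)/2) := by
  have hs : 0 < s := by linarith
  have hb : 0 < s - t := by linarith
  have ha : 0 < s - 2*t := by linarith
  set A := Real.sqrt (s - 2*t) with hAdef
  set B := Real.sqrt (s - t) with hBdef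
  set S := Real.sqrt s with hSdef
  have hA : 0 < A := Real.sqrt_pos.mpr ha
  have hB : 0 < B := Real.sqrt_pos.mpr hb
  have hS : 0 < S := Real.sqrt_pos.mpr hs
  have hA2 : A^2 = s - 2*t := Real.sq_sqrt ha.le
  have hB2 : B^2 = s - t := Real.sq_sqrt hb.le
  have hS2 : S^2 = s := Real.sq_sqrt hs.le
  have hAB : A ≤ B := Real.sqrt_le_sqrt (by linarith)
  have hBS : B ≤ S := Real.sqrt_le_sqrt (by linarith)
  set D := A*B*(A+B) with hDdef
  have hD : 0 < D := by positivity
  -- rpow rewrites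
  have r1 : (s - 2*t) ^ (-(1:ℝ)/2) = A⁻¹ := rpow_nhalf_pos ha
  have r2 : (s - t) ^ (-(1:ℝ)/2) = B⁻¹ := rpow_nhalf_pos hb
  have r3 : s ^ (-(1:ℝ)/2) = S⁻¹ := rpow_nhalf_pos hs
  have r4 : s ^ (-(3:ℝ)/2) = (S^3)⁻¹ := by
    have : s ^ (-(3:ℝ)/2) = (s ^ (-(1:ℝ)/2))^(3:ℕ) := by
      rw [← Real.rpow_natCast (s ^ (-(1:ℝ)/2)) 3, ← Real.rpow_mul hs.le]
      norm_num
    rw [this, r3, inv_pow]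
  -- key identity
  have e0 : A^2 - B^2 = -t := by rw [hA2, hB2]; ring
  have e1 : B⁻¹ - A⁻¹ = -t/D := by
    rw [inv_eq_one_div, inv_eq_one_div, div_sub_div _ _ hB.ne' hA.ne',
      div_eq_div_iff (by positivity : (0:ℝ) < B*A).ne' hD.ne']
    linear_combination (A*B) * e0
  have hQ : Q s t = (1 / Real.sqrt π) * ((1/2)/S - s/D) := by
    rw [Q_eq ht hs (by nlinarith) (by nlinarith), r1, r2, r3, e1]
    field_simp
    ring
  -- main bounds
  have hAS : A ≤ S := hAB.trans hBS
  have jA : S^2 - A^2 = 2*t := by linear_combination hS2 - hA2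
  have jB : S^2 - B^2 = t := by linear_combination hS2 - hB2
  have i1 : S^2*(S-B) ≤ S*t := by
    have e : S*t - S^2*(S-B) = (S-B)*S*B := by linear_combination -S*jB
    have h := mul_nonneg (mul_nonneg (sub_nonneg.mpr hBS) hS.le) hB.le
    linarith
  have i2 : B^2*(S-A) ≤ 2*S*t := by
    have e : 2*S*t - B^2*(S-A) = (S-A)*(S^2 + S*A - B^2) := by linear_combination -S*jA
    have hbr : 0 ≤ S^2 + S*A - B^2 := by
      have := mul_nonneg hS.le hA.le
      linarith [jB, ht.le]
    have h := mul_nonneg (sub_nonneg.mpr hAS) hbr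
    linarith
  have key1 : 2*S^3 - D ≤ 6*S*t := by
    have iden : 2*S^3 - D = S^2*(S-B) + B*(S^2-A^2) + S*(S^2-B^2) + B^2*(S-A) := by
      rw [hDdef]; ring
    rw [iden, jA, jB]
    have h1 : B*(2*t) ≤ S*(2*t) := by nlinarith
    linarith [i1, i2, h1]
  have hS2A : S^2 ≤ 3*A^2 := by rw [hS2, hA2]; linarith
  have hS2Alin : S ≤ 2*A := by nlinarith [mul_pos hA hS]
  have key2 : S^3 ≤ 3*D := by
    have h1 : 2*A^3 ≤ D := by
      calc 2*A^3 = A*A*(A+A) := by ring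
        _ ≤ A*B*(A+B) := by gcongr <;> first | exact hA.le | exact hAB
        _ = D := rfl
    have h2 : S*S^2 ≤ S*(3*A^2) := mul_le_mul_of_nonneg_left hS2A hS.le
    have h3 : S*(3*A^2) ≤ 2*A*(3*A^2) := by nlinarith [sq_nonneg A, pow_pos hA 2]
    nlinarith
  have keyD : D ≤ 2*S^3 := by
    calc D = A*B*(A+B) := rfl
      _ ≤ S*S*(S+S) := by gcongr <;> first | exact hA.le | exact hB.le | exact hAS | exact hBS
      _ = 2*S^3 := by ring
  -- combine
  have hsS : s*S = S^3 := by rw [← hS2]; ring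
  have hXnp : (1/2)/S - s/D ≤ 0 := by
    rw [sub_nonpos, div_le_div_iff₀ hS hD]
    nlinarith [hsS, keyD]
  have hXlb : s/D - (1/2)/S ≤ 9*t/S^3 := by
    rw [div_sub_div _ _ hD.ne' hS.ne', div_le_div_iff₀ (by positivity) (by positivity)]
    have e2 : (s*S - D*(1/2))*S^3 = (2*S^3 - D)*S^3/2 := by rw [← hS2]; ring
    have m1 : (2*S^3 - D)*S^3 ≤ (6*S*t)*S^3 :=
      mul_le_mul_of_nonneg_right key1 (le_of_lt (pow_pos hS 3))
    have m2 : (3*t*S)*S^3 ≤ (3*t*S)*(3*D) :=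
      mul_le_mul_of_nonneg_left key2 (by positivity : (0:ℝ) ≤ 3*t*S)
    nlinarith [m1, m2, e2]
  rw [hQ, abs_mul, abs_of_nonneg c_pos.le, abs_of_nonpos hXnp, r4]
  have : -((1/2)/S - s/D) ≤ 9*t/S^3 := by linarith
  calc (1 / Real.sqrt π) * -((1/2)/S - s/D) ≤ 1 * (9*t/S^3) := by
        apply mul_le_mul c_le_one this (by linarith) (by norm_num)
    _ = 9 * t * (S^3)⁻¹ := by ring

lemma int_nhalf {t : ℝ} (ht : 0 < t) :
    ∫ s in Set.Ioc (0:ℝ) t, s ^ (-(1:ℝ)/2) = 2 * Real.sqrt t := by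
  rw [← intervalIntegral.integral_of_le ht.le, integral_rpow (Or.inl (by norm_num)),
    Real.zero_rpow (by norm_num), Real.sqrt_eq_rpow]
  norm_num
  ring

lemma L1 {t : ℝ} (ht : 0 < t) :
    ∫⁻ s in Set.Ioc (0:ℝ) t, ENNReal.ofReal (s ^ (-(1:ℝ)/2)) = ENNReal.ofReal (2 * Real.sqrt t) := by
  rw [← MeasureTheory.ofReal_integral_eq_lintegral_ofReal, int_nhalf ht]
  · exact (intervalIntegrable_iff_integrableOn_Ioc_of_le ht.le).mp
      (intervalIntegral.intervalIntegrable_rpow' (by norm_num))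
  · exact Filter.Eventually.of_forall (fun s => nhalf_nonneg s)

lemma shift_integrable {a t : ℝ} (ht : 0 < t) :
    IntegrableOn (fun s : ℝ => (s - a) ^ (-(1:ℝ)/2)) (Set.Ioc a (a + t)) volume := by
  have h := (intervalIntegral.intervalIntegrable_rpow' (a := 0) (b := t)
    (r := -(1:ℝ)/2) (by norm_num)).comp_sub_right a
  rw [zero_add, add_comm t a] at h
  exact (intervalIntegrable_iff_integrableOn_Ioc_of_le (by linarith)).mp h

lemma shift_integral {a t : ℝ} (ht : 0 < t) :
    ∫ s in Set.Ioc a (a + t), (s - a) ^ (-(1:ℝ)/2) = 2 * Real.sqrt t := by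
  rw [← intervalIntegral.integral_of_le (by linarith : a ≤ a + t),
    intervalIntegral.integral_comp_sub_right (fun u => u ^ (-(1:ℝ)/2)) a]
  simp only [sub_self, add_sub_cancel_left]
  rw [integral_rpow (Or.inl (by norm_num)), Real.zero_rpow (by norm_num), Real.sqrt_eq_rpow]
  norm_num
  ring

lemma t_mul_nhalf {t : ℝ} (ht : 0 < t) : t * t ^ (-(1:ℝ)/2) = Real.sqrt t := by
  rw [show t * t ^ (-(1:ℝ)/2) = t ^ (1:ℝ) * t ^ (-(1:ℝ)/2) by rw [Real.rpow_one],
    ← Real.rpow_add ht, Real.sqrt_eq_rpow]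
  norm_num

lemma shift_lint {a t : ℝ} (ht : 0 < t) (c d : ℝ) (hc : 0 ≤ c) (hd : 0 ≤ d) :
    ∫⁻ s in Set.Ioc a (a + t), ENNReal.ofReal (c * (s - a) ^ (-(1:ℝ)/2) + d)
      ≤ ENNReal.ofReal (c * (2 * Real.sqrt t) + d * t) := by
  have hconst : IntegrableOn (fun _ : ℝ => d) (Set.Ioc a (a + t)) volume :=
    (integrableOn_const_iff (C := d)).mpr (Or.inr (by rw [Real.volume_Ioc]; exact ENNReal.ofReal_lt_top))
  have hi : IntegrableOn (fun s : ℝ => c * (s - a) ^ (-(1:ℝ)/2) + d)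
      (Set.Ioc a (a + t)) volume := ((shift_integrable ht).const_mul c).add hconst
  rw [← MeasureTheory.ofReal_integral_eq_lintegral_ofReal hi
    (Filter.Eventually.of_forall (fun s => by
      simp only [Pi.zero_apply]
      have h1 := nhalf_nonneg (s - a)
      have : 0 ≤ c * (s - a) ^ (-(1:ℝ)/2) := mul_nonneg hc h1
      linarith))]
  apply ENNReal.ofReal_le_ofReal
  rw [MeasureTheory.integral_add ((shift_integrable ht).const_mul c) hconst,
    MeasureTheory.integral_const_mul, MeasureTheory.setIntegral_const, Real.volume_real_Ioc_of_le (by linarith : a ≤ a + t),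
    smul_eq_mul, shift_integral ht]
  have : (a + t - a) = t := by ring
  rw [this]
  nlinarith

lemma L4 {t : ℝ} (ht : 0 < t) :
    ∫⁻ s in Set.Ioi (3*t), ENNReal.ofReal (9 * t * s ^ (-(3:ℝ)/2))
      ≤ ENNReal.ofReal (11 * Real.sqrt t) := by
  have h3t : 0 < 3*t := by linarith
  have hi : IntegrableOn (fun s : ℝ => 9 * t * s ^ (-(3:ℝ)/2)) (Set.Ioi (3*t)) volume :=
    (integrableOn_Ioi_rpow_of_lt (by norm_num) h3t).const_mul _
  rw [← MeasureTheory.ofReal_integral_eq_lintegral_ofReal hi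
    ((ae_restrict_iff' measurableSet_Ioi).mpr (Filter.Eventually.of_forall (fun s hs => by
      have hs0 : (0:ℝ) < s := lt_trans h3t hs
      exact mul_nonneg (by positivity) (Real.rpow_nonneg hs0.le _))))]
  apply ENNReal.ofReal_le_ofReal
  rw [MeasureTheory.integral_const_mul, integral_Ioi_rpow_of_lt (by norm_num) h3t]
  rw [show (-(3:ℝ)/2 + 1) = -(1:ℝ)/2 by norm_num]
  have hr : (3*t) ^ (-(1:ℝ)/2) = (Real.sqrt (3*t))⁻¹ := by
    rw [show -(1:ℝ)/2 = -(1/2) by norm_num, Real.rpow_neg h3t.le, Real.sqrt_eq_rpow]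
  rw [hr, Real.sqrt_mul (by norm_num : (0:ℝ) ≤ 3) t]
  have h3 : Real.sqrt 3 * Real.sqrt 3 = 3 := Real.mul_self_sqrt (by norm_num)
  have htt : Real.sqrt t * Real.sqrt t = t := Real.mul_self_sqrt ht.le
  have hpos : (0:ℝ) < Real.sqrt 3 * Real.sqrt t := by positivity
  have heq : 9 * t * (-(Real.sqrt 3 * Real.sqrt t)⁻¹ / (-(1:ℝ)/2))
      = 18 * t / (Real.sqrt 3 * Real.sqrt t) := by
    field_simp
    ring
  rw [heq, div_le_iff₀ hpos]
  nlinarith [h3, htt, Real.sqrt_nonneg 3, Real.sqrt_nonneg t, ht,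
    sq_nonneg (Real.sqrt 3 - 18/11), mul_pos ht ht]

theorem Q_integral_bound :
    ∃ C : ℝ, 0 < C ∧ ∀ t : ℝ, 0 < t →
      ∫⁻ s in Set.Ioi (0:ℝ), ENNReal.ofReal |Q s t| ≤ ENNReal.ofReal (C * Real.sqrt t) := by
  refine ⟨100, by norm_num, fun t ht => ?_⟩
  have hne : ∀ᵐ (s : ℝ), s ≠ t := by
    have := MeasureTheory.compl_mem_ae_iff.mpr (Real.volume_singleton (a := t))
    filter_upwards [this] with s hs
    simpa using hs
  have hne2 : ∀ᵐ (s : ℝ), s ≠ 2*t := by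
    have := MeasureTheory.compl_mem_ae_iff.mpr (Real.volume_singleton (a := 2*t))
    filter_upwards [this] with s hs
    simpa using hs
  -- piece 1
  have p1 : ∫⁻ s in Set.Ioc (0:ℝ) t, ENNReal.ofReal |Q s t| ≤ ENNReal.ofReal (2 * Real.sqrt t) := by
    rw [← L1 ht]
    refine lintegral_mono_ae ((ae_restrict_iff' measurableSet_Ioc).mpr ?_)
    filter_upwards [hne] with s hs hmem
    exact ENNReal.ofReal_le_ofReal (B1 ht hmem.1 (lt_of_le_of_ne hmem.2 hs))
  -- piece 2
  have p2 : ∫⁻ s in Set.Ioc t (2*t), ENNReal.ofReal |Q s t| ≤ ENNReal.ofReal (5 * Real.sqrt t) := by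
    have hb : ∫⁻ s in Set.Ioc t (2*t),
        ENNReal.ofReal (2 * (s - t) ^ (-(1:ℝ)/2) + t ^ (-(1:ℝ)/2))
          ≤ ENNReal.ofReal (2 * (2 * Real.sqrt t) + t ^ (-(1:ℝ)/2) * t) := by
      have := shift_lint (a := t) ht 2 (t ^ (-(1:ℝ)/2)) (by norm_num) (by
        rcases le_or_gt t 0 with h | h
        · linarith
        · positivity)
      rw [show t + t = 2*t by ring] at this
      exact this
    have hmono : ∫⁻ s in Set.Ioc t (2*t), ENNReal.ofReal |Q s t| ≤
        ∫⁻ s in Set.Ioc t (2*t),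
          ENNReal.ofReal (2 * (s - t) ^ (-(1:ℝ)/2) + t ^ (-(1:ℝ)/2)) := by
      refine lintegral_mono_ae ((ae_restrict_iff' measurableSet_Ioc).mpr ?_)
      filter_upwards [hne2] with s hs hmem
      exact ENNReal.ofReal_le_ofReal (B2 ht hmem.1 (lt_of_le_of_ne hmem.2 hs))
    refine le_trans hmono (le_trans hb (ENNReal.ofReal_le_ofReal ?_))
    have e2 : t ^ (-(1:ℝ)/2) * t = Real.sqrt t := by
      rw [mul_comm]
      rw [show t * t ^ (-(1:ℝ)/2) = t ^ (1:ℝ) * t ^ (-(1:ℝ)/2) by rw [Real.rpow_one],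
        ← Real.rpow_add ht, Real.sqrt_eq_rpow]
      norm_num
    rw [e2]; linarith
  -- piece 3
  have p3 : ∫⁻ s in Set.Ioc (2*t) (3*t), ENNReal.ofReal |Q s t|
      ≤ ENNReal.ofReal (10 * Real.sqrt t) := by
    have hb : ∫⁻ s in Set.Ioc (2*t) (3*t),
        ENNReal.ofReal (3 * (s - 2*t) ^ (-(1:ℝ)/2) + 4 * t ^ (-(1:ℝ)/2))
          ≤ ENNReal.ofReal (3 * (2 * Real.sqrt t) + (4 * t ^ (-(1:ℝ)/2)) * t) := by
      have := shift_lint (a := 2*t) ht 3 (4 * t ^ (-(1:ℝ)/2)) (by norm_num) (by positivity)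
      rw [show 2*t + t = 3*t by ring] at this
      exact this
    have hmono : ∫⁻ s in Set.Ioc (2*t) (3*t), ENNReal.ofReal |Q s t| ≤
        ∫⁻ s in Set.Ioc (2*t) (3*t),
          ENNReal.ofReal (3 * (s - 2*t) ^ (-(1:ℝ)/2) + 4 * t ^ (-(1:ℝ)/2)) := by
      refine lintegral_mono_ae ((ae_restrict_iff' measurableSet_Ioc).mpr ?_)
      filter_upwards [] with s hmem
      exact ENNReal.ofReal_le_ofReal (B3 ht hmem.1 hmem.2)
    refine le_trans hmono (le_trans hb (ENNReal.ofReal_le_ofReal ?_))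
    have e2 : t ^ (-(1:ℝ)/2) * t = Real.sqrt t := by
      rw [mul_comm]
      rw [show t * t ^ (-(1:ℝ)/2) = t ^ (1:ℝ) * t ^ (-(1:ℝ)/2) by rw [Real.rpow_one],
        ← Real.rpow_add ht, Real.sqrt_eq_rpow]
      norm_num
    nlinarith [e2, Real.sqrt_nonneg t]
  -- piece 4
  have p4 : ∫⁻ s in Set.Ioi (3*t), ENNReal.ofReal |Q s t|
      ≤ ENNReal.ofReal (11 * Real.sqrt t) := by
    refine le_trans ?_ (L4 ht)
    refine lintegral_mono_ae ((ae_restrict_iff' measurableSet_Ioi).mpr ?_)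
    filter_upwards [] with s hmem
    exact ENNReal.ofReal_le_ofReal (B4 ht (le_of_lt hmem))
  -- assemble
  have hset : Set.Ioi (0:ℝ) =
      (Set.Ioc 0 t ∪ Set.Ioc t (2*t) ∪ Set.Ioc (2*t) (3*t)) ∪ Set.Ioi (3*t) := by
    rw [Set.Ioc_union_Ioc_eq_Ioc ht.le (by linarith : t ≤ 2*t),
      Set.Ioc_union_Ioc_eq_Ioc (by linarith : (0:ℝ) ≤ 2*t) (by linarith : 2*t ≤ 3*t),
      Set.Ioc_union_Ioi_eq_Ioi (by linarith : (0:ℝ) ≤ 3*t)]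
  calc ∫⁻ s in Set.Ioi (0:ℝ), ENNReal.ofReal |Q s t|
      = ∫⁻ s in (Set.Ioc 0 t ∪ Set.Ioc t (2*t) ∪ Set.Ioc (2*t) (3*t)) ∪ Set.Ioi (3*t),
          ENNReal.ofReal |Q s t| := by rw [← hset]
    _ ≤ (∫⁻ s in Set.Ioc (0:ℝ) t, ENNReal.ofReal |Q s t|)
        + (∫⁻ s in Set.Ioc t (2*t), ENNReal.ofReal |Q s t|)
        + (∫⁻ s in Set.Ioc (2*t) (3*t), ENNReal.ofReal |Q s t|)
        + (∫⁻ s in Set.Ioi (3*t), ENNReal.ofReal |Q s t|) := by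
      refine le_trans (lintegral_union_le _ _ _) ?_
      refine add_le_add_left (le_trans (lintegral_union_le _ _ _) ?_) _
      exact add_le_add_left (lintegral_union_le _ _ _) _
    _ ≤ ENNReal.ofReal (2 * Real.sqrt t) + ENNReal.ofReal (5 * Real.sqrt t)
        + ENNReal.ofReal (10 * Real.sqrt t) + ENNReal.ofReal (11 * Real.sqrt t) := by
      exact add_le_add (add_le_add (add_le_add p1 p2) p3) p4
    _ ≤ ENNReal.ofReal (100 * Real.sqrt t) := by
      rw [← ENNReal.ofReal_add (by positivity) (by positivity),
        ← ENNReal.ofReal_add (by positivity) (by positivity),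
        ← ENNReal.ofReal_add (by positivity) (by positivity)]
      exact ENNReal.ofReal_le_ofReal (by nlinarith [Real.sqrt_nonneg t])
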